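/- For each m ≥ 2, the split graph S_m obtained from an independent set {u_1,...,u_m} and a clique {v_1,...,v_m} by joining u_i to v_j whenever i ≠ j has chromatic number m, and in every proper coloring with m colors the set {u_1,...,u_m} is a rainbow committee that is independent; hence S_m is not Edge-compelling-colorable with m colors. -/
import Mathlib


open SimpleGraph

/-- A proper coloring of `G` with `k` colors. -/
def ProperColoring {V : Type*} {k : ℕ} (G : SimpleGraph V) (c : V → Fin k) : Prop :=
  ∀ ⦃u v : V⦄, G.Adj u v → c u ≠ c v

/-- `f` selects a rainbow committee of the coloring `c`: one vertex of each color. -/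
def IsRainbow {V : Type*} {k : ℕ} (c : V → Fin k) (f : Fin k → V) : Prop :=
  ∀ i : Fin k, c (f i) = i

/-- The coloring `c` compels property `P`: every rainbow committee has property `P`. -/
def Compels {V : Type*} {k : ℕ} (c : V → Fin k) (P : Set V → Prop) : Prop :=
  ∀ f : Fin k → V, IsRainbow c f → P (Set.range f)

/-- The `P`-compelling chromatic number of `G`: the least number of colors in a proper
coloring, using every color, in which every rainbow committee has property `P`. -/
noncomputable def compellingChromNum {V : Type*} (G : SimpleGraph V) (P : Set V → Prop) : ℕ :=
  sInf {k : ℕ | ∃ c : V → Fin k,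
    ProperColoring G c ∧ Function.Surjective c ∧ Compels c P}

/-- Property `Edge`: the set contains at least one edge of `G`. -/
def HasEdge {V : Type*} (G : SimpleGraph V) (S : Set V) : Prop :=
  ∃ u ∈ S, ∃ v ∈ S, G.Adj u v

/-- The Edge-compelling chromatic number. -/
noncomputable def edgeCompellingChromNum {V : Type*} (G : SimpleGraph V) : ℕ :=
  compellingChromNum G (HasEdge G)

/-- The split graph `S_m`: an independent set `u_1, …, u_m` (left) and a clique
`v_1, …, v_m` (right), with `u_i` adjacent to `v_j` exactly when `i ≠ j`. -/
def splitGraph (m : ℕ) : SimpleGraph (Fin m ⊕ Fin m) :=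
  SimpleGraph.fromRel (fun a b =>
    match a, b with
    | Sum.inr i, Sum.inr j => i ≠ j
    | Sum.inl i, Sum.inr j => i ≠ j
    | _, _ => False)

/-- For `m ≥ 2`, the split graph `S_m` has chromatic number `m`; in every proper coloring
with `m` colors the independent set `{u_1, …, u_m}` is a rainbow committee (one vertex of
each of the `m` colors) and is independent; hence `S_m` has no Edge-compelling coloring
with `m` colors. -/
lemma splitGraph_adjLR (m : ℕ) (i j : Fin m) :
    (splitGraph m).Adj (Sum.inl i) (Sum.inr j) ↔ i ≠ j := by
  simp [splitGraph, fromRel_adj]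

lemma splitGraph_adjRR (m : ℕ) (i j : Fin m) :
    (splitGraph m).Adj (Sum.inr i) (Sum.inr j) ↔ i ≠ j := by
  simp [splitGraph, fromRel_adj]; tauto

lemma splitGraph_adjLL (m : ℕ) (i j : Fin m) :
    ¬ (splitGraph m).Adj (Sum.inl i) (Sum.inl j) := by
  simp [splitGraph, fromRel_adj]

lemma splitGraph_inl_inj (m : ℕ) (c : Fin m ⊕ Fin m → Fin m)
    (hc : ProperColoring (splitGraph m) c) :
    Function.Injective (fun i : Fin m => c (Sum.inl i)) := by
  have hR : Function.Injective (fun i : Fin m => c (Sum.inr i)) := by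
    intro i j h
    by_contra hij
    exact hc ((splitGraph_adjRR m i j).2 hij) h
  have hRsurj : Function.Surjective (fun i : Fin m => c (Sum.inr i)) :=
    Finite.surjective_of_injective hR
  have key : ∀ i : Fin m, c (Sum.inl i) = c (Sum.inr i) := by
    intro i
    obtain ⟨j, hj⟩ := hRsurj (c (Sum.inl i))
    have : i = j := by
      by_contra hij
      exact hc ((splitGraph_adjLR m i j).2 hij) hj.symm
    subst this; simpa using hj.symm
  intro i j h
  simp only [key] at h
  exact hR h

lemma splitGraph_colorable_lb (m n : ℕ) (h : (splitGraph m).Colorable n) : m ≤ n := by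
  obtain ⟨C⟩ := h
  have : Function.Injective (fun i : Fin m => C (Sum.inr i)) := by
    intro i j hij
    by_contra h'
    exact C.valid ((splitGraph_adjRR m i j).2 h') hij
  simpa using Fintype.card_le_of_injective _ this

theorem splitGraph_not_edge_compellable (m : ℕ) (hm : 2 ≤ m) :
    (splitGraph m).chromaticNumber = m ∧
    (∀ c : Fin m ⊕ Fin m → Fin m, ProperColoring (splitGraph m) c →
      Function.Injective (fun i : Fin m => c (Sum.inl i))) ∧
    (∀ i j : Fin m, ¬(splitGraph m).Adj (Sum.inl i) (Sum.inl j)) ∧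
    ¬∃ c : Fin m ⊕ Fin m → Fin m, ProperColoring (splitGraph m) c ∧
      Function.Surjective c ∧ Compels c (HasEdge (splitGraph m)) := by
  refine ⟨?_, splitGraph_inl_inj m, splitGraph_adjLL m, ?_⟩
  · have hcol : (splitGraph m).Colorable m := by
      refine ⟨⟨Sum.elim id id, ?_⟩⟩
      intro a b hab
      rcases a with i | i <;> rcases b with j | j <;> simp_all
      · exact absurd hab (splitGraph_adjLL m i j)
      · exact (splitGraph_adjLR m i j).1 hab
      · exact fun h => (splitGraph_adjLR m j i).1 hab.symm h.symm
      · exact (splitGraph_adjRR m i j).1 hab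
    refine le_antisymm (hcol.chromaticNumber_le) ?_
    rw [chromaticNumber_eq_biInf]
    exact le_iInf₂ fun n hn => Nat.cast_le.2 (splitGraph_colorable_lb m n hn)
  · rintro ⟨c, hc, -, hcomp⟩
    have hinj := splitGraph_inl_inj m c hc
    have hbij : Function.Bijective (fun i : Fin m => c (Sum.inl i)) :=
      ⟨hinj, Finite.surjective_of_injective hinj⟩
    let e := Equiv.ofBijective _ hbij
    have hrb : IsRainbow c (fun k => Sum.inl (e.symm k)) := fun k => e.apply_symm_apply k
    obtain ⟨u, hu, v, hv, huv⟩ := hcomp _ hrb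
    obtain ⟨a, rfl⟩ := hu
    obtain ⟨b, rfl⟩ := hv
    exact splitGraph_adjLL m _ _ huv
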